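/- For z ∈ ℂ with Re z > −1 and any Schwartz function g ∈ S(ℝ), the integral ∫_0^∞ e^{−iμτ} τ^z g(τ) dτ satisfies the bound |∫_0^∞ e^{−iμτ} τ^z g(τ) dτ| ≤ C (1 + μ)^{−Re z − 1} for all μ ≥ 0, where C depends only on z and g. -/

import Mathlib

open MeasureTheory

noncomputable section OscAux

namespace OscAux

open MeasureTheory Set Filter Complex

/-- multiplication by `x` as a map on Schwartz space -/
def mulX : SchwartzMap ℝ ℂ →L[ℝ] SchwartzMap ℝ ℂ :=
  SchwartzMap.bilinLeftCLM ((ContinuousLinearMap.lsmul ℝ ℝ : ℝ →L[ℝ] ℂ →L[ℝ] ℂ).flip)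
    (ContinuousLinearMap.id ℝ ℝ).hasTemperateGrowth

@[simp] lemma mulX_apply (g : SchwartzMap ℝ ℂ) (x : ℝ) : mulX g x = x • g x := rfl

/-- `H w g = w • g + x • g'`, so that `(τ^w g)' = τ^(w-1) • (H w g)` for `τ > 0`. -/
def Hmap (w : ℂ) (g : SchwartzMap ℝ ℂ) : SchwartzMap ℝ ℂ :=
  w • g + mulX (SchwartzMap.derivCLM ℝ ℂ g)

lemma Hmap_apply (w : ℂ) (g : SchwartzMap ℝ ℂ) (x : ℝ) :
    Hmap w g x = w * g x + (x : ℂ) * deriv g x := by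
  simp [Hmap, SchwartzMap.derivCLM_apply, smul_eq_mul, Complex.real_smul]

/-- the integrand -/
def K (w : ℂ) (g : SchwartzMap ℝ ℂ) (μ : ℝ) (τ : ℝ) : ℂ :=
  Complex.exp (-(Complex.I * μ * τ)) * (τ : ℂ) ^ w * g τ

lemma norm_exp_eq_one (μ τ : ℝ) : ‖Complex.exp (-(Complex.I * μ * τ))‖ = 1 := by
  rw [Complex.norm_exp]
  simp [Complex.mul_re]

lemma norm_K (w : ℂ) (g : SchwartzMap ℝ ℂ) (μ : ℝ) {τ : ℝ} (hτ : 0 < τ) :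
    ‖K w g μ τ‖ = τ ^ w.re * ‖g τ‖ := by
  rw [K, norm_mul, norm_mul, norm_exp_eq_one, one_mul,
    Complex.norm_cpow_eq_rpow_re_of_pos hτ]

/-- sup bound for a Schwartz function -/
lemma sup_bound (g : SchwartzMap ℝ ℂ) : ∃ C : ℝ, 0 ≤ C ∧ ∀ x, ‖g x‖ ≤ C := by
  obtain ⟨C, hC0, hC⟩ := g.decay 0 0
  exact ⟨C, hC0.le, fun x => by simpa [norm_iteratedFDeriv_zero] using hC x⟩

/-- integrability of `τ^r ‖g τ‖` on `(1,∞)` -/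
lemma int_tail (g : SchwartzMap ℝ ℂ) (r : ℝ) :
    IntegrableOn (fun τ : ℝ => τ ^ r * ‖g τ‖) (Ioi 1) := by
  obtain ⟨k, hk⟩ := exists_nat_ge r
  have hint : Integrable (fun x : ℝ => ‖x‖ ^ k * ‖g x‖) := g.integrable_pow_mul volume k
  refine (hint.restrict (s := Ioi 1)).mono' ?_ ?_
  · apply (ContinuousOn.mul (fun x hx => ?_) g.continuous.norm.continuousOn).aestronglyMeasurable
      measurableSet_Ioi
    exact (Real.continuousAt_rpow_const x r (Or.inl (by rintro rfl; exact absurd hx (by simp)))).continuousWithinAt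
  · filter_upwards [ae_restrict_mem measurableSet_Ioi] with τ hτ
    have h1 : (1:ℝ) < τ := hτ
    have h0 : (0:ℝ) < τ := lt_trans one_pos h1
    rw [Real.norm_eq_abs, _root_.abs_of_nonneg (by positivity)]
    have : τ ^ r ≤ τ ^ (k : ℝ) := Real.rpow_le_rpow_of_exponent_le h1.le hk
    calc τ ^ r * ‖g τ‖ ≤ τ ^ (k:ℝ) * ‖g τ‖ := by
          exact mul_le_mul_of_nonneg_right this (norm_nonneg _)
      _ = ‖τ‖ ^ k * ‖g τ‖ := by
          rw [Real.rpow_natCast, Real.norm_eq_abs, abs_of_pos h0]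

/-- integrability of `τ^r ‖g τ‖` on `(a,1]` -/
lemma int_head (g : SchwartzMap ℝ ℂ) {r : ℝ} {a : ℝ} (ha : 0 ≤ a)
    (h : -1 < r ∨ 0 < a) : IntegrableOn (fun τ : ℝ => τ ^ r * ‖g τ‖) (Ioc a 1) := by
  obtain ⟨C, hC0, hC⟩ := sup_bound g
  rcases h with h | h
  · have hrint : IntegrableOn (fun τ : ℝ => τ ^ r) (Ioc 0 1) := by
      have := (intervalIntegral.intervalIntegrable_rpow' (a := 0) (b := 1) h).1
      simpa [intervalIntegrable_iff_integrableOn_Ioc_of_le] using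
        (intervalIntegral.intervalIntegrable_rpow' (a := 0) (b := 1) h)
    refine (IntegrableOn.mono_set ?_ (Ioc_subset_Ioc_left ha))
    refine ((hrint.mul_const C).mono' ?_ ?_)
    · apply ((ContinuousOn.rpow_const continuousOn_id (fun x hx => Or.inl (ne_of_gt hx.1))).mul
        g.continuous.norm.continuousOn).aestronglyMeasurable measurableSet_Ioc
    · filter_upwards [ae_restrict_mem measurableSet_Ioc] with τ hτ
      rw [Real.norm_eq_abs,
        _root_.abs_of_nonneg (mul_nonneg (Real.rpow_nonneg hτ.1.le r) (norm_nonneg _))]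
      exact mul_le_mul_of_nonneg_left (hC τ) (Real.rpow_nonneg hτ.1.le r)
  · refine (ContinuousOn.integrableOn_compact isCompact_Icc ?_).mono_set Ioc_subset_Icc_self
    refine ContinuousOn.mul ?_ g.continuous.norm.continuousOn
    exact ContinuousOn.rpow_const continuousOn_id (fun x hx => Or.inl (ne_of_gt (lt_of_lt_of_le h hx.1)))

/-- integrability of `τ^r ‖g τ‖` on `(a,∞)` -/
lemma int_aux (g : SchwartzMap ℝ ℂ) {r : ℝ} {a : ℝ} (ha : 0 ≤ a)
    (h : -1 < r ∨ 0 < a) : IntegrableOn (fun τ : ℝ => τ ^ r * ‖g τ‖) (Ioi a) := by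
  rcases le_or_gt a 1 with ha1 | ha1
  · rw [← Ioc_union_Ioi_eq_Ioi ha1]
    exact (int_head g ha h).union (int_tail g r)
  · exact (int_tail g r).mono_set (Ioi_subset_Ioi ha1.le)

lemma K_aestronglyMeasurable (w : ℂ) (g : SchwartzMap ℝ ℂ) (μ : ℝ) {a : ℝ} (ha : 0 ≤ a) :
    AEStronglyMeasurable (K w g μ) (volume.restrict (Ioi a)) := by
  refine ContinuousOn.aestronglyMeasurable ?_ measurableSet_Ioi
  refine ContinuousOn.mul (ContinuousOn.mul ?_ ?_) g.continuous.continuousOn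
  · fun_prop
  · intro x hx
    have hx0 : (0:ℝ) < x := lt_of_le_of_lt ha hx
    exact (continuousAt_ofReal_cpow_const x w (Or.inr hx0.ne')).continuousWithinAt

/-- integrability of the main integrand -/
lemma int_K (w : ℂ) (g : SchwartzMap ℝ ℂ) (μ : ℝ) {a : ℝ} (ha : 0 ≤ a)
    (h : -1 < w.re ∨ 0 < a) : IntegrableOn (K w g μ) (Ioi a) := by
  refine ((int_aux g ha h).mono' (K_aestronglyMeasurable w g μ ha) ?_)
  filter_upwards [ae_restrict_mem measurableSet_Ioi] with τ hτ
  have h0 : (0:ℝ) < τ := lt_of_le_of_lt ha hτ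
  rw [norm_K w g μ h0]

lemma hasDerivAt_cpow_real (w : ℂ) {x : ℝ} (hx : 0 < x) :
    HasDerivAt (fun y : ℝ => (y : ℂ) ^ w) (w * (x : ℂ) ^ (w - 1)) x := by
  rcases eq_or_ne w 0 with rfl | hw
  · simpa using (hasDerivAt_const x (1 : ℂ)).congr_of_eventuallyEq
      (Filter.Eventually.of_forall fun y => by simp [Complex.cpow_zero])
  · have h1 : w - 1 ≠ -1 := by
      intro h; apply hw; have := congrArg (· + 1) h; simpa using this
    have h := (hasDerivAt_ofReal_cpow_const' hx.ne' h1).const_mul w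
    simp only [sub_add_cancel] at h
    refine h.congr_of_eventuallyEq (Filter.Eventually.of_forall fun y => ?_)
    field_simp

lemma hasDerivAt_K (w : ℂ) (g : SchwartzMap ℝ ℂ) (μ : ℝ) {τ : ℝ} (hτ : 0 < τ) :
    HasDerivAt (K w g μ)
      (-(Complex.I * μ) * K w g μ τ + K (w - 1) (Hmap w g) μ τ) τ := by
  have hτ0 : (τ : ℂ) ≠ 0 := by simpa using hτ.ne'
  have he : HasDerivAt (fun t : ℝ => Complex.exp (-(Complex.I * μ * t)))
      (-(Complex.I * μ) * Complex.exp (-(Complex.I * μ * τ))) τ := by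
    have h1 : HasDerivAt (fun y : ℂ => Complex.exp (-(Complex.I * μ) * y))
        (-(Complex.I * μ) * Complex.exp (-(Complex.I * μ) * τ)) (τ : ℂ) := by
      simpa [mul_comm] using ((hasDerivAt_id ((τ:ℝ) : ℂ)).const_mul (-(Complex.I * μ))).cexp
    have h2 := h1.comp_ofReal
    refine h2.congr_of_eventuallyEq (Filter.Eventually.of_forall fun y => by ring_nf) |>.congr_deriv (by ring_nf)
  have hp := hasDerivAt_cpow_real w hτ
  have hg : HasDerivAt (fun t : ℝ => g t) (deriv g τ) τ :=
    (g.differentiableAt).hasDerivAt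
  have h := (he.mul hp).mul hg
  convert h using 1
  · rfl
  · rfl
  have hsplit : (τ : ℂ) ^ w = (τ : ℂ) ^ (w - 1) * τ := by
    conv_lhs => rw [show w = w - 1 + 1 by ring]
    rw [Complex.cpow_add _ _ hτ0, Complex.cpow_one]
  simp only [K, Hmap_apply, Pi.mul_apply]
  rw [hsplit]; ring

lemma tendsto_K_atTop (w : ℂ) (g : SchwartzMap ℝ ℂ) (μ : ℝ) :
    Tendsto (K w g μ) atTop (nhds 0) := by
  obtain ⟨k, hk⟩ := exists_nat_ge (w.re + 1)
  obtain ⟨C, hC0, hC⟩ := g.decay k 0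
  apply squeeze_zero_norm' (a := fun τ : ℝ => C * τ⁻¹)
  · filter_upwards [Filter.eventually_ge_atTop (1 : ℝ)] with τ hτ
    have h0 : (0:ℝ) < τ := lt_of_lt_of_le one_pos hτ
    have hgτ : ‖g τ‖ ≤ C / τ ^ (k : ℝ) := by
      rw [le_div_iff₀ (by positivity)]
      have := hC τ
      rw [norm_iteratedFDeriv_zero, Real.norm_eq_abs, _root_.abs_of_pos h0] at this
      calc ‖g τ‖ * τ ^ (k:ℝ) = τ ^ k * ‖g τ‖ := by rw [Real.rpow_natCast]; ring
        _ ≤ C := this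
    rw [norm_K w g μ h0]
    calc τ ^ w.re * ‖g τ‖ ≤ τ ^ w.re * (C / τ ^ (k:ℝ)) :=
          mul_le_mul_of_nonneg_left hgτ (Real.rpow_nonneg h0.le _)
      _ = C * τ ^ (w.re - k) := by
          rw [Real.rpow_sub h0]; ring
      _ ≤ C * τ⁻¹ := by
          apply mul_le_mul_of_nonneg_left _ hC0.le
          rw [← Real.rpow_neg_one τ]
          exact Real.rpow_le_rpow_of_exponent_le hτ (by linarith)
  · have : Tendsto (fun τ : ℝ => τ⁻¹) atTop (nhds 0) := tendsto_inv_atTop_zero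
    simpa using this.const_mul C

/-- Integration by parts identity. -/
lemma ibp (w : ℂ) (g : SchwartzMap ℝ ℂ) {μ : ℝ} {a : ℝ} (ha : 0 ≤ a)
    (hb : 0 < w.re ∨ 0 < a) :
    Complex.I * μ * (∫ τ in Ioi a, K w g μ τ) =
      K w g μ a + ∫ τ in Ioi a, K (w - 1) (Hmap w g) μ τ := by
  have hbK : -1 < w.re ∨ 0 < a := hb.imp_left (fun h => by linarith)
  have hbK' : -1 < (w - 1).re ∨ 0 < a := hb.imp_left (fun h => by simp [Complex.sub_re]; linarith)
  have hint1 : IntegrableOn (K w g μ) (Ioi a) := int_K w g μ ha hbK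
  have hint2 : IntegrableOn (K (w - 1) (Hmap w g) μ) (Ioi a) := int_K (w-1) (Hmap w g) μ ha hbK'
  have hderiv : ∀ τ ∈ Ioi a, HasDerivAt (K w g μ)
      (-(Complex.I * μ) * K w g μ τ + K (w - 1) (Hmap w g) μ τ) τ :=
    fun τ hτ => hasDerivAt_K w g μ (lt_of_le_of_lt ha hτ)
  have hcont : ContinuousWithinAt (K w g μ) (Ici a) a := by
    rcases hb.symm with h | h
    · exact (hasDerivAt_K w g μ h).continuousAt.continuousWithinAt
    · refine ContinuousWithinAt.mul (ContinuousWithinAt.mul ?_ ?_) g.continuous.continuousWithinAt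
      · exact (Continuous.cexp ((continuous_const.mul Complex.continuous_ofReal).neg)).continuousWithinAt
      · exact (continuousAt_ofReal_cpow_const a w (Or.inl h)).continuousWithinAt
  have hftc := integral_Ioi_of_hasDerivAt_of_tendsto hcont hderiv
    (((hint1.const_mul (-(Complex.I * μ))).add hint2)) (tendsto_K_atTop w g μ)
  rw [integral_add (hint1.const_mul _) hint2] at hftc
  rw [integral_const_mul] at hftc
  have := hftc
  linear_combination -this

lemma int_rpow_Ioc {a r : ℝ} (ha : 0 < a) : IntegrableOn (fun τ : ℝ => τ ^ r) (Ioc a 1) := by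
  refine (ContinuousOn.integrableOn_compact isCompact_Icc ?_).mono_set Ioc_subset_Icc_self
  exact ContinuousOn.rpow_const continuousOn_id
    (fun x hx => Or.inl (ne_of_gt (lt_of_lt_of_le ha hx.1)))

lemma norm_integral_K_le (w : ℂ) (g : SchwartzMap ℝ ℂ) (μ : ℝ) {a : ℝ} (ha : 0 ≤ a)
    (h : -1 < w.re ∨ 0 < a) :
    ‖∫ τ in Ioi a, K w g μ τ‖ ≤ ∫ τ in Ioi a, τ ^ w.re * ‖g τ‖ := by
  refine norm_integral_le_of_norm_le (int_aux g ha h) ?_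
  filter_upwards [ae_restrict_mem measurableSet_Ioi] with τ hτ
  rw [norm_K w g μ (lt_of_le_of_lt ha hτ)]

lemma base (z : ℂ) (hz1 : -1 < z.re) (hz2 : z.re ≤ 0) (g : SchwartzMap ℝ ℂ) :
    ∃ C : ℝ, 0 < C ∧ ∀ μ : ℝ, 1 ≤ μ →
      ‖∫ τ in Ioi (0:ℝ), K z g μ τ‖ ≤ C * μ ^ (-z.re - 1) := by
  obtain ⟨Bg, hBg0, hBg⟩ := sup_bound g
  set h₁ := Hmap z g with hh₁
  set h₂ := Hmap (z - 1) h₁ with hh₂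
  obtain ⟨B1, hB10, hB1⟩ := sup_bound h₁
  obtain ⟨B2, hB20, hB2⟩ := sup_bound h₂
  set C₂ := ∫ τ in Ioi (1:ℝ), ‖h₂ τ‖ with hC₂
  have hC₂0 : 0 ≤ C₂ := setIntegral_nonneg measurableSet_Ioi (fun τ _ => norm_nonneg _)
  set r := z.re with hr
  have hr1 : (0:ℝ) < r + 1 := by linarith
  have hr2 : (0:ℝ) < 1 - r := by linarith
  refine ⟨Bg / (r+1) + Bg + B1 + B2 / (1-r) + C₂ + 1, by positivity, fun μ hμ => ?_⟩
  have hμ0 : (0:ℝ) < μ := lt_of_lt_of_le one_pos hμ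
  set a := μ⁻¹ with hadef
  have ha0 : (0:ℝ) < a := inv_pos.mpr hμ0
  have ha1 : a ≤ 1 := by
    rw [hadef]; exact inv_le_one_of_one_le₀ hμ
  -- split the integral
  have hintIoc : IntegrableOn (K z g μ) (Ioc 0 a) :=
    (int_K z g μ le_rfl (Or.inl hz1)).mono_set Ioc_subset_Ioi_self
  have hintIoi : IntegrableOn (K z g μ) (Ioi a) := int_K z g μ ha0.le (Or.inr ha0)
  have hsplit : (∫ τ in Ioi (0:ℝ), K z g μ τ) =
      (∫ τ in Ioc 0 a, K z g μ τ) + ∫ τ in Ioi a, K z g μ τ := by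
    rw [← setIntegral_union (Ioc_disjoint_Ioi le_rfl) measurableSet_Ioi hintIoc hintIoi,
      Ioc_union_Ioi_eq_Ioi ha0.le]
  -- term A
  have hA : ‖∫ τ in Ioc 0 a, K z g μ τ‖ ≤ Bg / (r+1) * a ^ (r+1) := by
    have hint : IntegrableOn (fun τ : ℝ => τ ^ r * Bg) (Ioc 0 a) :=
      ((intervalIntegral.intervalIntegrable_rpow' (a := 0) (b := a) hz1).1).mul_const Bg
    have h1 : ‖∫ τ in Ioc 0 a, K z g μ τ‖ ≤ ∫ τ in Ioc 0 a, τ ^ r * Bg := by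
      refine norm_integral_le_of_norm_le hint ?_
      filter_upwards [ae_restrict_mem measurableSet_Ioc] with τ hτ
      rw [norm_K z g μ hτ.1]
      exact mul_le_mul_of_nonneg_left (hBg τ) (Real.rpow_nonneg hτ.1.le r)
    have h2 : (∫ τ in Ioc 0 a, τ ^ r * Bg) = Bg / (r+1) * a ^ (r+1) := by
      rw [integral_mul_const, ← intervalIntegral.integral_of_le ha0.le,
        integral_rpow (Or.inl hz1), Real.zero_rpow (ne_of_gt hr1)]
      ring
    linarith [h1, h2.le, h2.ge]
  -- IBP twice on the tail
  have e1 := ibp z g (μ := μ) ha0.le (Or.inr ha0)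
  have e2 := ibp (z - 1) h₁ (μ := μ) ha0.le (Or.inr ha0)
  rw [← hh₁] at e1
  rw [← hh₂] at e2
  have hnormμ : ‖Complex.I * (μ:ℂ)‖ = μ := by
    rw [norm_mul, Complex.norm_I,
      Complex.norm_real, one_mul, Real.norm_eq_abs, _root_.abs_of_pos hμ0]
  set X := ‖∫ τ in Ioi a, K z g μ τ‖ with hX
  set Y := ‖∫ τ in Ioi a, K (z-1) h₁ μ τ‖ with hY
  set Z := ‖∫ τ in Ioi a, K (z-1-1) h₂ μ τ‖ with hZ
  have hKa : ‖K z g μ a‖ ≤ a ^ r * Bg := by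
    rw [norm_K z g μ ha0]
    exact mul_le_mul_of_nonneg_left (hBg a) (Real.rpow_nonneg ha0.le r)
  have hK1a : ‖K (z-1) h₁ μ a‖ ≤ a ^ (r-1) * B1 := by
    rw [norm_K _ _ _ ha0]
    have : (z-1).re = r - 1 := by simp [Complex.sub_re, Complex.one_re, hr]
    rw [this]
    exact mul_le_mul_of_nonneg_left (hB1 a) (Real.rpow_nonneg ha0.le _)
  -- bound on Z
  have hZb : Z ≤ B2 / (1-r) * a ^ (r-1) + C₂ := by
    have hre : (z-1-1).re = r - 2 := by
      simp only [Complex.sub_re, Complex.one_re, ← hr]; ring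
    have h1 : Z ≤ ∫ τ in Ioi a, τ ^ (r-2) * ‖h₂ τ‖ := by
      rw [hZ]
      have := norm_integral_K_le (z-1-1) h₂ μ ha0.le (Or.inr ha0)
      rwa [hre] at this
    have hint1 : IntegrableOn (fun τ : ℝ => τ ^ (r-2) * ‖h₂ τ‖) (Ioc a 1) :=
      int_head h₂ ha0.le (Or.inr ha0)
    have hint2 : IntegrableOn (fun τ : ℝ => τ ^ (r-2) * ‖h₂ τ‖) (Ioi 1) := int_tail h₂ _
    have h2 : (∫ τ in Ioi a, τ ^ (r-2) * ‖h₂ τ‖) =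
        (∫ τ in Ioc a 1, τ ^ (r-2) * ‖h₂ τ‖) + ∫ τ in Ioi (1:ℝ), τ ^ (r-2) * ‖h₂ τ‖ := by
      rw [← setIntegral_union (Ioc_disjoint_Ioi le_rfl) measurableSet_Ioi hint1 hint2,
        Ioc_union_Ioi_eq_Ioi ha1]
    have h3 : (∫ τ in Ioc a 1, τ ^ (r-2) * ‖h₂ τ‖) ≤ B2 / (1-r) * a ^ (r-1) := by
      have hint0 : IntegrableOn (fun τ : ℝ => τ ^ (r-2)) (Ioc a 1) := int_rpow_Ioc ha0
      have hm : (∫ τ in Ioc a 1, τ ^ (r-2) * ‖h₂ τ‖) ≤ ∫ τ in Ioc a 1, τ ^ (r-2) * B2 := by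
        refine setIntegral_mono_on hint1 (hint0.mul_const B2) measurableSet_Ioc fun τ hτ => ?_
        exact mul_le_mul_of_nonneg_left (hB2 τ) (Real.rpow_nonneg (le_of_lt (lt_of_lt_of_le ha0 hτ.1.le)) _)
      have hval : (∫ τ in Ioc a 1, τ ^ (r-2) * B2) = (1 - a ^ (r-1)) / (r-1) * B2 := by
        rw [integral_mul_const, ← intervalIntegral.integral_of_le ha1,
          integral_rpow (Or.inr ⟨by intro h; linarith, ?_⟩)]
        · rw [show r - 2 + 1 = r - 1 by ring, Real.one_rpow]
        · rw [Set.uIcc_of_le ha1]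
          intro hmem
          exact absurd hmem.1 (not_le.mpr ha0)
      have hineq : (1 - a ^ (r-1)) / (r-1) * B2 ≤ B2 / (1-r) * a ^ (r-1) := by
        have hp0 : 0 ≤ a ^ (r-1) := Real.rpow_nonneg ha0.le _
        have he : (1 - a ^ (r-1)) / (r-1) = (a ^ (r-1) - 1) / (1-r) := by
          rw [div_eq_div_iff (by linarith) (by linarith)]; ring
        have hb : (a ^ (r-1) - 1) / (1-r) ≤ a ^ (r-1) / (1-r) := by
          rw [div_le_div_iff₀ hr2 hr2]; nlinarith
        calc (1 - a ^ (r-1)) / (r-1) * B2 ≤ a ^ (r-1) / (1-r) * B2 := by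
              rw [he]; exact mul_le_mul_of_nonneg_right hb hB20
          _ = B2 / (1-r) * a ^ (r-1) := by ring
      linarith
    have h4 : (∫ τ in Ioi (1:ℝ), τ ^ (r-2) * ‖h₂ τ‖) ≤ C₂ := by
      refine setIntegral_mono_on hint2 (h₂.integrable.norm.integrableOn) measurableSet_Ioi
        fun τ hτ => ?_
      have h1τ : (1:ℝ) ≤ τ := le_of_lt hτ
      have : τ ^ (r-2) ≤ 1 := Real.rpow_le_one_of_one_le_of_nonpos h1τ (by linarith)
      exact mul_le_of_le_one_left (norm_nonneg _) this
    linarith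
  -- from the IBP identities
  have hmuX : μ * X ≤ a ^ r * Bg + Y := by
    have : μ * X = ‖K z g μ a + ∫ τ in Ioi a, K (z-1) h₁ μ τ‖ := by
      rw [← e1, norm_mul, hnormμ]
    rw [this]
    exact le_trans (norm_add_le _ _) (add_le_add hKa le_rfl)
  have hmuY : μ * Y ≤ a ^ (r-1) * B1 + Z := by
    have : μ * Y = ‖K (z-1) h₁ μ a + ∫ τ in Ioi a, K (z-1-1) h₂ μ τ‖ := by
      rw [← e2, norm_mul, hnormμ]
    rw [this]
    exact le_trans (norm_add_le _ _) (add_le_add hK1a le_rfl)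
  -- rpow algebra
  have h_ar : a ^ r * a = a ^ (r+1) := (Real.rpow_add_one ha0.ne' r).symm
  have h_ar1 : a ^ (r-1) * a * a = a ^ (r+1) := by
    rw [← Real.rpow_add_one ha0.ne' (r-1), ← Real.rpow_add_one ha0.ne' (r-1+1)]
    norm_num
  have ha2 : a * a ≤ a ^ (r+1) := by
    have h1 : a * a = a ^ (2:ℝ) := by
      rw [show (2:ℝ) = ((2:ℕ):ℝ) by norm_num, Real.rpow_natCast]; ring
    rw [h1]
    exact Real.rpow_le_rpow_of_exponent_ge ha0 ha1 (by linarith)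
  have haP : 0 ≤ a ^ (r+1) := Real.rpow_nonneg ha0.le _
  -- combine
  have hXfromY : X ≤ (a ^ r * Bg + Y) * a := by
    have h := mul_le_mul_of_nonneg_right hmuX ha0.le
    rw [mul_comm μ X, mul_assoc, mul_inv_cancel₀ hμ0.ne', mul_one] at h
    exact h
  have hYfromZ : Y ≤ (a ^ (r-1) * B1 + Z) * a := by
    have h := mul_le_mul_of_nonneg_right hmuY ha0.le
    rw [mul_comm μ Y, mul_assoc, mul_inv_cancel₀ hμ0.ne', mul_one] at h
    exact h
  have hZ0 : 0 ≤ Z := norm_nonneg _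
  have hXfin : X ≤ (Bg + B1 + B2/(1-r) + C₂) * a ^ (r+1) := by
    calc X ≤ (a ^ r * Bg + Y) * a := hXfromY
      _ ≤ (a ^ r * Bg + (a ^ (r-1) * B1 + Z) * a) * a :=
          mul_le_mul_of_nonneg_right (add_le_add_right hYfromZ _) ha0.le
      _ = Bg * (a ^ r * a) + B1 * (a ^ (r-1) * a * a) + Z * (a * a) := by ring
      _ ≤ Bg * a ^ (r+1) + B1 * a ^ (r+1) + (B2/(1-r) * a ^ (r-1) + C₂) * (a * a) := by
          rw [h_ar, h_ar1]
          exact add_le_add_right (mul_le_mul_of_nonneg_right hZb (by positivity)) _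
      _ = Bg * a ^ (r+1) + B1 * a ^ (r+1) + (B2/(1-r)) * (a ^ (r-1) * a * a) + C₂ * (a * a) := by
          ring
      _ ≤ Bg * a ^ (r+1) + B1 * a ^ (r+1) + (B2/(1-r)) * a ^ (r+1) + C₂ * a ^ (r+1) := by
          rw [h_ar1]
          exact add_le_add_right (mul_le_mul_of_nonneg_left ha2 hC₂0) _
      _ = (Bg + B1 + B2/(1-r) + C₂) * a ^ (r+1) := by ring
  -- final
  have hpow : a ^ (r+1) = μ ^ (-r-1) := by
    rw [hadef, Real.inv_rpow hμ0.le, ← Real.rpow_neg hμ0.le]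
    congr 1; ring
  calc ‖∫ τ in Ioi (0:ℝ), K z g μ τ‖
      ≤ ‖∫ τ in Ioc 0 a, K z g μ τ‖ + X := by rw [hsplit]; exact norm_add_le _ _
    _ ≤ Bg / (r+1) * a ^ (r+1) + (Bg + B1 + B2/(1-r) + C₂) * a ^ (r+1) := add_le_add hA hXfin
    _ = (Bg / (r+1) + Bg + B1 + B2/(1-r) + C₂) * a ^ (r+1) := by ring
    _ ≤ (Bg / (r+1) + Bg + B1 + B2/(1-r) + C₂ + 1) * a ^ (r+1) := by
        refine mul_le_mul_of_nonneg_right (by linarith) haP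
    _ = (Bg / (r+1) + Bg + B1 + B2/(1-r) + C₂ + 1) * μ ^ (-r-1) := by rw [hpow]

lemma main (n : ℕ) : ∀ z : ℂ, -1 < z.re → z.re ≤ n → ∀ g : SchwartzMap ℝ ℂ,
    ∃ C : ℝ, 0 < C ∧ ∀ μ : ℝ, 1 ≤ μ →
      ‖∫ τ in Ioi (0:ℝ), K z g μ τ‖ ≤ C * μ ^ (-z.re - 1) := by
  induction n with
  | zero => exact fun z h1 h2 g => base z h1 (by exact_mod_cast h2) g
  | succ n ih =>
    intro z h1 h2 g
    rcases le_or_gt z.re n with h | h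
    · exact ih z h1 h g
    · have hz0 : 0 < z.re := lt_of_le_of_lt (Nat.cast_nonneg n) h
      have hzne : z ≠ 0 := fun hzz => by rw [hzz] at hz0; simp at hz0
      obtain ⟨C, hC0, hC⟩ := ih (z - 1)
        (by rw [Complex.sub_re, Complex.one_re]; linarith)
        (by rw [Complex.sub_re, Complex.one_re]; push_cast at h2 ⊢; linarith) (Hmap z g)
      refine ⟨C, hC0, fun μ hμ => ?_⟩
      have hμ0 : (0:ℝ) < μ := lt_of_lt_of_le one_pos hμ
      have e := ibp z g (μ := μ) le_rfl (Or.inl hz0)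
      have h00 : K z g μ 0 = 0 := by
        simp [K, Complex.ofReal_zero, Complex.zero_cpow hzne]
      rw [h00, zero_add] at e
      have hnormμ : ‖Complex.I * (μ:ℂ)‖ = μ := by
        rw [norm_mul, Complex.norm_I,
          Complex.norm_real, one_mul, Real.norm_eq_abs, _root_.abs_of_pos hμ0]
      have e' := congrArg norm e
      rw [norm_mul, hnormμ] at e'
      have hmain : μ * ‖∫ τ in Ioi (0:ℝ), K z g μ τ‖ ≤ C * μ ^ (-(z-1).re - 1) := by
        rw [e']; exact hC μ hμ
      have hre : -(z-1).re - 1 = -z.re := by rw [Complex.sub_re, Complex.one_re]; ring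
      rw [hre] at hmain
      have hfin : ‖∫ τ in Ioi (0:ℝ), K z g μ τ‖ ≤ μ⁻¹ * (C * μ ^ (-z.re)) := by
        rw [le_inv_mul_iff₀ hμ0, mul_comm μ]
        calc ‖∫ τ in Ioi (0:ℝ), K z g μ τ‖ * μ = μ * ‖∫ τ in Ioi (0:ℝ), K z g μ τ‖ := by ring
          _ ≤ C * μ ^ (-z.re) := hmain
      calc ‖∫ τ in Ioi (0:ℝ), K z g μ τ‖ ≤ μ⁻¹ * (C * μ ^ (-z.re)) := hfin
        _ = C * (μ ^ (-z.re) * μ⁻¹) := by ring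
        _ = C * μ ^ (-z.re - 1) := by
            rw [← Real.rpow_neg_one μ, ← Real.rpow_add hμ0]; ring_nf

lemma final (z : ℂ) (hz : -1 < z.re) (g : SchwartzMap ℝ ℂ) :
    ∃ C : ℝ, 0 < C ∧ ∀ μ : ℝ, 0 ≤ μ →
      ‖∫ τ in Ioi (0:ℝ), K z g μ τ‖ ≤ C * (1 + μ) ^ (-z.re - 1) := by
  obtain ⟨n, hn⟩ := exists_nat_ge z.re
  obtain ⟨C₁, hC₁0, hC₁⟩ := main n z hz hn g
  set r := z.re with hr
  set C₀ := ∫ τ in Ioi (0:ℝ), τ ^ r * ‖g τ‖ with hC₀def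
  have hC₀0 : 0 ≤ C₀ := setIntegral_nonneg measurableSet_Ioi
    (fun τ hτ => mul_nonneg (Real.rpow_nonneg (le_of_lt hτ) r) (norm_nonneg _))
  have hC₀ : ∀ μ : ℝ, ‖∫ τ in Ioi (0:ℝ), K z g μ τ‖ ≤ C₀ :=
    fun μ => norm_integral_K_le z g μ le_rfl (Or.inl hz)
  refine ⟨(C₁ + C₀ + 1) * 2 ^ (r + 1), by positivity, fun μ hμ => ?_⟩
  have h1μ : (0:ℝ) < 1 + μ := by linarith
  have hexp : -r - 1 < 0 := by linarith
  have htwo : (2:ℝ) ^ (r+1) * (2:ℝ) ^ (-r-1) = 1 := by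
    rw [← Real.rpow_add two_pos]; norm_num
  rcases le_or_gt μ 1 with hμ1 | hμ1
  · have hb : (2:ℝ) ^ (-r-1) ≤ (1 + μ) ^ (-r-1) :=
      Real.rpow_le_rpow_of_nonpos h1μ (by linarith) hexp.le
    calc ‖∫ τ in Ioi (0:ℝ), K z g μ τ‖ ≤ C₀ := hC₀ μ
      _ = (C₀ * 1) := by ring
      _ ≤ (C₁ + C₀ + 1) * ((2:ℝ) ^ (r+1) * (2:ℝ) ^ (-r-1)) := by
          rw [htwo]; nlinarith
      _ = (C₁ + C₀ + 1) * 2 ^ (r+1) * (2:ℝ) ^ (-r-1) := by ring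
      _ ≤ (C₁ + C₀ + 1) * 2 ^ (r+1) * (1 + μ) ^ (-r-1) := by
          refine mul_le_mul_of_nonneg_left hb (by positivity)
  · have hμ0 : (0:ℝ) < μ := lt_trans one_pos hμ1
    have hb : ((2:ℝ) * μ) ^ (-r-1) ≤ (1 + μ) ^ (-r-1) :=
      Real.rpow_le_rpow_of_nonpos h1μ (by linarith) hexp.le
    have hmul : ((2:ℝ) * μ) ^ (-r-1) = (2:ℝ) ^ (-r-1) * μ ^ (-r-1) :=
      Real.mul_rpow (by norm_num) hμ0.le
    calc ‖∫ τ in Ioi (0:ℝ), K z g μ τ‖ ≤ C₁ * μ ^ (-r-1) := hC₁ μ hμ1.le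
      _ ≤ (C₁ + C₀ + 1) * (2 ^ (r+1) * 2 ^ (-r-1)) * μ ^ (-r-1) := by
          rw [htwo]; nlinarith [Real.rpow_nonneg hμ0.le (-r-1)]
      _ = (C₁ + C₀ + 1) * 2 ^ (r+1) * ((2:ℝ) * μ) ^ (-r-1) := by
          rw [hmul]; ring
      _ ≤ (C₁ + C₀ + 1) * 2 ^ (r+1) * (1 + μ) ^ (-r-1) := by
          refine mul_le_mul_of_nonneg_left hb (by positivity)

end OscAux

end OscAux

/-- For `Re z > -1` and a Schwartz function `g`, the oscillatory integral
`∫_0^∞ e^{-iμτ} τ^z g(τ) dτ` is bounded by `C (1 + μ)^{-Re z - 1}` for all `μ ≥ 0`. -/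
theorem oscillatory_integral_homogeneous_bound (z : ℂ) (hz : -1 < z.re)
    (g : SchwartzMap ℝ ℂ) :
    ∃ C : ℝ, 0 < C ∧ ∀ μ : ℝ, 0 ≤ μ →
      ‖∫ τ in Set.Ioi (0 : ℝ),
          Complex.exp (-(Complex.I * μ * τ)) * (τ : ℂ) ^ z * g τ‖ ≤
        C * (1 + μ) ^ (-z.re - 1) := by
  exact OscAux.final z hz g
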